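/- arXiv:1501.00430 — 8 statements merged into one kernel-verified Lean document; each statement's English description precedes it below -/
import Mathlib

section
/- The f-vector of the d-dimensional cube, where f_k = 2^(d-k) * C(d,k) is the number of k-dimensional faces, is strictly increasing up to index ⌊d/3⌋ and strictly decreasing from index ⌊(d+1)/3⌋ on; that is, f_0 < f_1 < ... < f_{⌊d/3⌋} and f_{⌊(d+1)/3⌋} > ... > f_{d-1}. -/
/-- The f-vector of the d-cube, f_k = 2^(d-k) * C(d,k), is strictly increasing
up to index ⌊d/3⌋ and strictly decreasing from index ⌊(d+1)/3⌋ on. -/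
theorem cube_fvector_strict_mono (d : ℕ) (hd : 0 < d) (f : ℕ → ℕ)
    (hf : ∀ k, f k = 2 ^ (d - k) * Nat.choose d k) :
    (∀ k, k < d / 3 → f k < f (k + 1)) ∧
    (∀ k, (d + 1) / 3 ≤ k → k + 1 ≤ d - 1 → f (k + 1) < f k) := by
  have main : ∀ k, k + 1 ≤ d →
      (2 * (k+1) < d - k → f k < f (k+1)) ∧
      (d - k < 2 * (k+1) → f (k+1) < f k) := by
    intro k hk
    have hc : 0 < Nat.choose d k := Nat.choose_pos (by omega)
    have hid : Nat.choose d (k+1) * (k+1) = Nat.choose d k * (d - k) :=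
      Nat.choose_succ_right_eq d k
    have h1 : d - (k+1) = d - k - 1 := by omega
    have h2 : d - k = (d - k - 1) + 1 := by omega
    have hp : 0 < 2 ^ (d - k - 1) := Nat.pow_pos (by norm_num)
    have lhs : f k * (k+1) = 2 ^ (d - k - 1) * Nat.choose d k * (2 * (k+1)) := by
      rw [hf]; nth_rewrite 1 [h2]; rw [pow_succ]; ring
    have rhs : f (k+1) * (k+1) = 2 ^ (d - k - 1) * Nat.choose d k * (d - k) := by
      rw [hf, h1, mul_assoc, hid]; ring
    constructor
    · intro h
      have : f k * (k+1) < f (k+1) * (k+1) := by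
        rw [lhs, rhs]
        exact Nat.mul_lt_mul_of_pos_left h (Nat.mul_pos hp hc)
      exact Nat.lt_of_mul_lt_mul_right this
    · intro h
      have : f (k+1) * (k+1) < f k * (k+1) := by
        rw [lhs, rhs]
        exact Nat.mul_lt_mul_of_pos_left h (Nat.mul_pos hp hc)
      exact Nat.lt_of_mul_lt_mul_right this
  constructor
  · intro k hk
    exact ((main k (by omega)).1 (by omega))
  · intro k hk1 hk2
    exact ((main k (by omega)).2 (by omega))
end

section
/- The f-vector of the d-cube (f_k = 2^(d-k) * C(d,k)) is unimodal with peak at ⌊d/3⌋: it is non-decreasing on indices 0,...,⌊d/3⌋ and non-increasing on indices ⌊d/3⌋,...,d-1. -/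
/-- The f-vector of the d-cube, f_k = 2^(d-k) * C(d,k), is unimodal with peak at ⌊d/3⌋:
non-decreasing on 0,...,⌊d/3⌋ and non-increasing on ⌊d/3⌋,...,d-1. -/
theorem cube_fvector_unimodal (d : ℕ) (hd : 0 < d) (f : ℕ → ℕ)
    (hf : ∀ k, f k = 2 ^ (d - k) * Nat.choose d k) :
    (∀ k, k + 1 ≤ d / 3 → f k ≤ f (k + 1)) ∧
    (∀ k, d / 3 ≤ k → k + 1 ≤ d - 1 → f (k + 1) ≤ f k) := by
  have key : ∀ k, Nat.choose d (k+1) * (k+1) = Nat.choose d k * (d - k) :=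
    fun k => Nat.choose_succ_right_eq d k
  constructor
  · intro k hk
    have hkd : k < d := by omega
    have h3 : 3 * (k + 1) ≤ d := by
      calc 3 * (k + 1) = (k + 1) * 3 := by ring
        _ ≤ (d / 3) * 3 := Nat.mul_le_mul_right 3 hk
        _ ≤ d := Nat.div_mul_le_self d 3
    -- 2 * C(d,k) ≤ C(d,k+1)
    have hc : 2 * Nat.choose d k ≤ Nat.choose d (k+1) := by
      have hpos : 0 < k + 1 := Nat.succ_pos k
      apply Nat.le_of_mul_le_mul_right _ hpos
      rw [key k]
      have h1 : 2 * (k + 1) ≤ d - k := by omega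
      calc 2 * Nat.choose d k * (k + 1) = Nat.choose d k * (2 * (k + 1)) := by ring
        _ ≤ Nat.choose d k * (d - k) := Nat.mul_le_mul_left _ h1
    have hpow : d - k = (d - (k + 1)) + 1 := by omega
    rw [hf k, hf (k+1), hpow, pow_succ]
    calc 2 ^ (d - (k+1)) * 2 * Nat.choose d k
        = 2 ^ (d - (k+1)) * (2 * Nat.choose d k) := by ring
      _ ≤ 2 ^ (d - (k+1)) * Nat.choose d (k+1) := Nat.mul_le_mul_left _ hc
  · intro k hk hk2
    have hkd : k + 1 < d := by omega
    have h3 : d ≤ 3 * k + 2 := by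
      omega
    have hc : Nat.choose d (k+1) ≤ 2 * Nat.choose d k := by
      have hpos : 0 < k + 1 := Nat.succ_pos k
      apply Nat.le_of_mul_le_mul_right _ hpos
      rw [key k]
      have h1 : d - k ≤ 2 * (k + 1) := by omega
      calc Nat.choose d k * (d - k) ≤ Nat.choose d k * (2 * (k + 1)) :=
            Nat.mul_le_mul_left _ h1
        _ = 2 * Nat.choose d k * (k + 1) := by ring
    have hpow : d - k = (d - (k + 1)) + 1 := by omega
    rw [hf k, hf (k+1), hpow, pow_succ]
    calc 2 ^ (d - (k+1)) * Nat.choose d (k+1)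
        ≤ 2 ^ (d - (k+1)) * (2 * Nat.choose d k) := Nat.mul_le_mul_left _ hc
      _ = 2 ^ (d - (k+1)) * 2 * Nat.choose d k := by ring
end

section
/- Let d be a positive integer and H(i,j) = 2^(-j) * C(d-i-1, d-j-1) for 0 ≤ i,j ≤ d-1. Then for each fixed i, the i-th row of H satisfies: H(i,i) < H(i,i+1) < ... < H(i, ⌊(d+2i)/3⌋ - 1) ≤ H(i, ⌊(d+2i)/3⌋) > H(i, ⌊(d+2i)/3⌋ + 1) > ... > H(i, d-1). -/
private lemma choose_lt_aux (n m : ℕ) (h1 : m + 1 ≤ n) (h2 : 2 * n ≤ 3 * m) :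
    2 * n.choose (m + 1) < n.choose m := by
  have key := Nat.choose_succ_right_eq n m
  have hpos : 0 < n.choose m := Nat.choose_pos (by omega)
  have : (2 * n.choose (m + 1)) * (m + 1) < n.choose m * (m + 1) := by
    calc (2 * n.choose (m + 1)) * (m + 1) = 2 * (n.choose m * (n - m)) := by rw [mul_assoc, key]
    _ < n.choose m * (m + 1) := by
        have : 2 * (n - m) < m + 1 := by omega
        calc 2 * (n.choose m * (n - m)) = n.choose m * (2 * (n - m)) := by ring
        _ < n.choose m * (m + 1) := by exact (Nat.mul_lt_mul_left hpos).mpr this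
  exact lt_of_mul_lt_mul_right this (by omega)

private lemma choose_le_aux (n m : ℕ) (h1 : m + 1 ≤ n) (h2 : 2 * n ≤ 3 * m + 1) :
    2 * n.choose (m + 1) ≤ n.choose m := by
  have key := Nat.choose_succ_right_eq n m
  have : (2 * n.choose (m + 1)) * (m + 1) ≤ n.choose m * (m + 1) := by
    calc (2 * n.choose (m + 1)) * (m + 1) = 2 * (n.choose m * (n - m)) := by rw [mul_assoc, key]
    _ ≤ n.choose m * (m + 1) := by
        have : 2 * (n - m) ≤ m + 1 := by omega
        calc 2 * (n.choose m * (n - m)) = n.choose m * (2 * (n - m)) := by ring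
        _ ≤ n.choose m * (m + 1) := Nat.mul_le_mul_left _ this
  exact Nat.le_of_mul_le_mul_right this (by omega)

private lemma choose_gt_aux (n m : ℕ) (h1 : m + 1 ≤ n) (h2 : 3 * m + 2 ≤ 2 * n) :
    n.choose m < 2 * n.choose (m + 1) := by
  have key := Nat.choose_succ_right_eq n m
  have hpos : 0 < n.choose m := Nat.choose_pos (by omega)
  have : n.choose m * (m + 1) < (2 * n.choose (m + 1)) * (m + 1) := by
    calc n.choose m * (m + 1) < n.choose m * (2 * (n - m)) := by
          exact (Nat.mul_lt_mul_left hpos).mpr (by omega)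
    _ = 2 * (n.choose m * (n - m)) := by ring
    _ = (2 * n.choose (m + 1)) * (m + 1) := by rw [mul_assoc, key]
  exact lt_of_mul_lt_mul_right this (by omega)

private lemma bridge_lt (a b : ℕ) (j : ℕ) (h : 2 * a < b) :
    (2 : ℚ) ^ (-(j : ℤ)) * a < (2 : ℚ) ^ (-((j + 1 : ℕ) : ℤ)) * b := by
  have h2 : ((j + 1 : ℕ) : ℤ) = (j : ℤ) + 1 := by push_cast; ring
  rw [h2]
  have he : (2 : ℚ) ^ (-((j : ℤ) + 1)) = (2 : ℚ) ^ (-(j : ℤ)) * 2⁻¹ := by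
    rw [neg_add, zpow_add₀ (two_ne_zero), zpow_neg_one]
  rw [he, mul_assoc]
  have hp : (0 : ℚ) < (2 : ℚ) ^ (-(j : ℤ)) := zpow_pos (by norm_num) _
  refine (mul_lt_mul_iff_right₀ hp).mpr ?_
  rw [inv_mul_eq_div, lt_div_iff₀ (by norm_num : (0:ℚ) < 2)]
  have : ((2 * a : ℕ) : ℚ) < (b : ℕ) := by exact_mod_cast Nat.cast_lt.mpr h
  push_cast at this ⊢
  linarith

private lemma bridge_gt (a b : ℕ) (j : ℕ) (h : b < 2 * a) :
    (2 : ℚ) ^ (-((j + 1 : ℕ) : ℤ)) * b < (2 : ℚ) ^ (-(j : ℤ)) * a := by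
  have h2 : ((j + 1 : ℕ) : ℤ) = (j : ℤ) + 1 := by push_cast; ring
  rw [h2]
  have he : (2 : ℚ) ^ (-((j : ℤ) + 1)) = (2 : ℚ) ^ (-(j : ℤ)) * 2⁻¹ := by
    rw [neg_add, zpow_add₀ (two_ne_zero), zpow_neg_one]
  rw [he, mul_assoc]
  have hp : (0 : ℚ) < (2 : ℚ) ^ (-(j : ℤ)) := zpow_pos (by norm_num) _
  refine (mul_lt_mul_iff_right₀ hp).mpr ?_
  rw [inv_mul_eq_div, div_lt_iff₀ (by norm_num : (0:ℚ) < 2)]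
  have : ((b : ℕ) : ℚ) < ((2 * a : ℕ) : ℚ) := by exact_mod_cast Nat.cast_lt.mpr h
  push_cast at this ⊢
  linarith

private lemma bridge_le (a b : ℕ) (j : ℕ) (h : 2 * a ≤ b) :
    (2 : ℚ) ^ (-(j : ℤ)) * a ≤ (2 : ℚ) ^ (-((j + 1 : ℕ) : ℤ)) * b := by
  have h2 : ((j + 1 : ℕ) : ℤ) = (j : ℤ) + 1 := by push_cast; ring
  rw [h2]
  have he : (2 : ℚ) ^ (-((j : ℤ) + 1)) = (2 : ℚ) ^ (-(j : ℤ)) * 2⁻¹ := by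
    rw [neg_add, zpow_add₀ (two_ne_zero), zpow_neg_one]
  rw [he, mul_assoc]
  have hp : (0 : ℚ) < (2 : ℚ) ^ (-(j : ℤ)) := zpow_pos (by norm_num) _
  refine (mul_le_mul_iff_right₀ hp).mpr ?_
  rw [inv_mul_eq_div, le_div_iff₀ (by norm_num : (0:ℚ) < 2)]
  have : ((2 * a : ℕ) : ℚ) ≤ (b : ℕ) := by exact_mod_cast Nat.cast_le.mpr h
  push_cast at this ⊢
  linarith

/-- The i-th row of H(i,j) = 2^(-j) * C(d-i-1, d-j-1) satisfies
H(i,i) < H(i,i+1) < ... < H(i,⌊(d+2i)/3⌋-1) ≤ H(i,⌊(d+2i)/3⌋) > ... > H(i,d-1). -/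
theorem H_row_unimodal (d : ℕ) (hd : 0 < d) (i : ℕ) (hi : i ≤ d - 1) (H : ℕ → ℕ → ℚ)
    (hH : ∀ i j, H i j = (2 : ℚ) ^ (-(j : ℤ)) * ((d - i - 1).choose (d - j - 1) : ℚ)) :
    (∀ j, i ≤ j → j + 2 ≤ (d + 2 * i) / 3 → H i j < H i (j + 1)) ∧
    (∀ j, i ≤ j → j + 1 = (d + 2 * i) / 3 → H i j ≤ H i (j + 1)) ∧
    (∀ j, (d + 2 * i) / 3 ≤ j → j + 2 ≤ d → H i (j + 1) < H i j) := by
  refine ⟨?_, ?_, ?_⟩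
  · intro j hij hj
    rw [hH, hH]
    have hjd : j + 3 ≤ d := by omega
    have e1 : d - j - 1 = (d - j - 2) + 1 := by omega
    have e2 : d - (j + 1) - 1 = d - j - 2 := by omega
    rw [e1, e2]
    exact bridge_lt _ _ j (choose_lt_aux (d - i - 1) (d - j - 2) (by omega) (by omega))
  · intro j hij hj
    rw [hH, hH]
    have hjd : j + 2 ≤ d := by omega
    have e1 : d - j - 1 = (d - j - 2) + 1 := by omega
    have e2 : d - (j + 1) - 1 = d - j - 2 := by omega
    rw [e1, e2]
    exact bridge_le _ _ j (choose_le_aux (d - i - 1) (d - j - 2) (by omega) (by omega))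
  · intro j hj hjd
    rw [hH, hH]
    have hij : i ≤ j := by omega
    have e1 : d - j - 1 = (d - j - 2) + 1 := by omega
    have e2 : d - (j + 1) - 1 = d - j - 2 := by omega
    rw [e1, e2]
    exact bridge_gt _ _ j (choose_gt_aux (d - i - 1) (d - j - 2) (by omega) (by omega))
end

section
/- Let d be a positive integer, 0 ≤ i ≤ k ≤ d-1, with H(i,j) = 2^(-j)*C(d-i-1,d-j-1) and a_j = H(i,j) + H(k,j). Then the vector (a_0,...,a_{d-1}) is unimodal, peaking at ⌊(d+2i)/3⌋. -/
/-- Ratio step: if `p * (n+1-k) ≤ (n+1) * q` then `C(n,k) * p ≤ C(n+1,k) * q`. -/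
lemma choose_ratio_step (n k p q : ℕ) (hk : k ≤ n) (h : p * (n + 1 - k) ≤ (n + 1) * q) :
    n.choose k * p ≤ (n + 1).choose k * q := by
  have hpos : 0 < n + 1 - k := by omega
  have hid : (n + 1).choose k * (n + 1 - k) = n.choose k * (n + 1) :=
    (Nat.choose_mul_succ_eq n k).symm
  apply Nat.le_of_mul_le_mul_right (a := n.choose k * p) (c := n + 1 - k) _ hpos
  calc n.choose k * p * (n + 1 - k)
      = n.choose k * (p * (n + 1 - k)) := by ring
    _ ≤ n.choose k * ((n + 1) * q) := Nat.mul_le_mul_left _ h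
    _ = (n.choose k * (n + 1)) * q := by ring
    _ = ((n + 1).choose k * (n + 1 - k)) * q := by rw [hid]
    _ = (n + 1).choose k * q * (n + 1 - k) := by ring

/-- B1: base case v = 1 of the two-row inequality. -/
lemma B1 : ∀ (w s n : ℕ), n + w = 3 * s → n.choose (2 * s) * (2 * w + 1) ≤ (3 * s + 1).choose (2 * s) := by
  intro w
  induction w with
  | zero =>
    intro s n h
    simpa using Nat.choose_le_choose (2 * s) (by omega : n ≤ 3 * s + 1)
  | succ w ih =>
    intro s n h
    by_cases hn : n < 2 * s
    · simp [Nat.choose_eq_zero_of_lt hn]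
    push_neg at hn
    have ihn := ih s (n + 1) (by omega)
    have key : n.choose (2 * s) * (2 * (w + 1) + 1) ≤ (n + 1).choose (2 * s) * (2 * w + 1) := by
      apply choose_ratio_step n (2 * s) _ _ hn
      have hc : n + 1 - 2 * s + 2 * s = n + 1 := by omega
      nlinarith [hc]
    exact key.trans ihn

/-- B2: base case v = 2 of the two-row inequality. -/
lemma B2 : ∀ (w s n : ℕ), n + w = 3 * s + 2 →
    n.choose (2 * s + 1) * (2 * w) ≤ (3 * s + 3).choose (2 * s + 1) * 2 := by
  intro w
  induction w with
  | zero => intro s n h; simp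
  | succ w ih =>
    intro s n h
    by_cases hn : n < 2 * s + 1
    · simp [Nat.choose_eq_zero_of_lt hn]
    push_neg at hn
    rcases Nat.eq_zero_or_pos w with hw | hw
    · subst hw
      have := Nat.choose_le_choose (2 * s + 1) (by omega : n ≤ 3 * s + 3)
      omega
    have ihn := ih s (n + 1) (by omega)
    have key : n.choose (2 * s + 1) * (2 * (w + 1)) ≤ (n + 1).choose (2 * s + 1) * (2 * w) := by
      apply choose_ratio_step n (2 * s + 1) _ _ hn
      have hc : n + 1 - (2 * s + 1) + (2 * s + 1) = n + 1 := by omega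
      nlinarith [hc]
    exact key.trans ihn

/-- The two-row inequality: if 2n + u = 3t + 1 and 2m = 3t + 1 + v with u, v ≥ 1,
then C(n,t)·u ≤ C(m,t)·v. -/
lemma keyA : ∀ (m n t u v : ℕ), 2 * n + u = 3 * t + 1 → 2 * m = 3 * t + 1 + v →
    1 ≤ u → 1 ≤ v → n.choose t * u ≤ m.choose t * v := by
  intro m
  induction m using Nat.strong_induction_on with
  | _ m ih =>
    intro n t u v hu hv hu1 hv1
    rcases lt_or_ge v 3 with hv3 | hv3
    · -- base cases v = 1 or v = 2
      interval_cases v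
      · -- v = 1 : t is even, t = 2s, m = 3s+1, u = 2w+1 with n + w = 3s
        obtain ⟨s, hs⟩ : ∃ s, t = 2 * s := ⟨t / 2, by omega⟩
        obtain ⟨w, hw⟩ : ∃ w, u = 2 * w + 1 := ⟨u / 2, by omega⟩
        have hm : m = 3 * s + 1 := by omega
        subst hs hw hm
        simpa using B1 w s n (by omega)
      · -- v = 2 : t odd, t = 2s+1, m = 3s+3, u = 2w with n + w = 3s+2
        obtain ⟨s, hs⟩ : ∃ s, t = 2 * s + 1 := ⟨t / 2, by omega⟩
        obtain ⟨w, hw⟩ : ∃ w, u = 2 * w := ⟨u / 2, by omega⟩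
        have hm : m = 3 * s + 3 := by omega
        subst hs hw hm
        exact B2 w s n (by omega)
    · -- recursive step : reduce m by 1, v by 2
      have hm1 : m - 1 < m := by omega
      have h1 := ih (m - 1) hm1 n t u (v - 2) hu (by omega) hu1 (by omega)
      calc n.choose t * u ≤ (m - 1).choose t * (v - 2) := h1
        _ ≤ m.choose t * v :=
            Nat.mul_le_mul (Nat.choose_le_choose t (by omega)) (by omega)

/-- Increasing side, per row: if 2x + 2 ≤ 3(t+1) then 2·C(x,t+1) ≤ C(x,t). -/
lemma keyI (x t : ℕ) (h : 2 * x + 2 ≤ 3 * (t + 1)) : 2 * x.choose (t + 1) ≤ x.choose t := by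
  rcases lt_or_ge x (t + 1) with hx | hx
  · rcases Nat.eq_or_lt_of_le hx with hx' | hx'
    · simp [Nat.choose_eq_zero_of_lt (by omega : x < t + 1), ← hx',
        Nat.choose_self]
    · simp [Nat.choose_eq_zero_of_lt (by omega : x < t + 1)]
  · have hid : x.choose (t + 1) * (t + 1) = x.choose t * (x - t) :=
      Nat.choose_succ_right_eq x t
    apply Nat.le_of_mul_le_mul_right (c := t + 1) _ (by omega)
    calc 2 * x.choose (t + 1) * (t + 1) = 2 * (x.choose (t + 1) * (t + 1)) := by ring
      _ = 2 * (x.choose t * (x - t)) := by rw [hid]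
      _ = x.choose t * (2 * (x - t)) := by ring
      _ ≤ x.choose t * (t + 1) := Nat.mul_le_mul_left _ (by omega)

/-- Decreasing side, per row: if 3(t+1) ≤ 2x + 2 then C(x,t) ≤ 2·C(x,t+1). -/
lemma keyDrow (x t : ℕ) (h : 3 * (t + 1) ≤ 2 * x + 2) : x.choose t ≤ 2 * x.choose (t + 1) := by
  have hx : t + 1 ≤ x := by omega
  have hid : x.choose (t + 1) * (t + 1) = x.choose t * (x - t) :=
    Nat.choose_succ_right_eq x t
  apply Nat.le_of_mul_le_mul_right (c := t + 1) _ (by omega)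
  calc x.choose t * (t + 1) ≤ x.choose t * (2 * (x - t)) :=
        Nat.mul_le_mul_left _ (by omega)
    _ = 2 * (x.choose t * (x - t)) := by ring
    _ = 2 * (x.choose (t + 1) * (t + 1)) := by rw [hid]
    _ = 2 * x.choose (t + 1) * (t + 1) := by ring

/-- Decreasing side, per row with slack: if 3(t+1) ≤ 2x + 1 then C(x,t) + 1 ≤ 2·C(x,t+1). -/
lemma keyDrow' (x t : ℕ) (h : 3 * (t + 1) ≤ 2 * x + 1) : x.choose t + 1 ≤ 2 * x.choose (t + 1) := by
  have hx : t + 1 ≤ x := by omega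
  have hct : t + 1 ≤ x.choose t := by
    calc t + 1 = (t + 1).choose t := (Nat.choose_succ_self_right t).symm
      _ ≤ x.choose t := Nat.choose_le_choose t hx
  have hid : x.choose (t + 1) * (t + 1) = x.choose t * (x - t) :=
    Nat.choose_succ_right_eq x t
  apply Nat.le_of_mul_le_mul_right (c := t + 1) _ (by omega)
  calc (x.choose t + 1) * (t + 1) = x.choose t * (t + 1) + (t + 1) := by ring
    _ ≤ x.choose t * (t + 1) + x.choose t * 1 := by
        have := hct; nlinarith
    _ = x.choose t * (t + 2) := by ring
    _ ≤ x.choose t * (2 * (x - t)) := Nat.mul_le_mul_left _ (by omega)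
    _ = 2 * (x.choose t * (x - t)) := by ring
    _ = 2 * (x.choose (t + 1) * (t + 1)) := by rw [hid]
    _ = 2 * x.choose (t + 1) * (t + 1) := by ring

/-- Main decreasing-side inequality for two rows. -/
lemma keyD (m n t : ℕ) (hnm : n ≤ m) (h : 3 * (t + 1) ≤ 2 * m + 1) :
    m.choose t + n.choose t ≤ 2 * m.choose (t + 1) + 2 * n.choose (t + 1) := by
  by_cases h1 : 3 * (t + 1) ≤ 2 * n + 2
  · have hm := keyDrow m t (by omega)
    have hn := keyDrow n t h1
    omega
  push_neg at h1
  rcases lt_or_ge n t with hnt | hnt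
  · -- n < t : the n row vanishes
    have h0 : n.choose t = 0 := Nat.choose_eq_zero_of_lt hnt
    have h0' : n.choose (t + 1) = 0 := Nat.choose_eq_zero_of_lt (by omega)
    have := keyDrow m t (by omega)
    omega
  rcases Nat.eq_or_lt_of_le hnt with hnt' | hnt'
  · -- n = t
    have h0 : n.choose (t + 1) = 0 := Nat.choose_eq_zero_of_lt (by omega)
    have h1' : n.choose t = 1 := by rw [← hnt']; exact Nat.choose_self t
    have := keyDrow' m t h
    omega
  · -- t + 1 ≤ n : main case, use keyA
    have htn : t + 1 ≤ n := hnt'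
    set u : ℕ := 3 * t + 1 - 2 * n with hu
    set v : ℕ := 2 * m - 3 * t - 1 with hv
    have hu1 : 1 ≤ u := by omega
    have hv1 : 1 ≤ v := by omega
    have hA : n.choose t * u ≤ m.choose t * v :=
      keyA m n t u v (by omega) (by omega) hu1 hv1
    have em : m.choose (t + 1) * (t + 1) = m.choose t * (m - t) :=
      Nat.choose_succ_right_eq m t
    have en : n.choose (t + 1) * (t + 1) = n.choose t * (n - t) :=
      Nat.choose_succ_right_eq n t
    apply Nat.le_of_mul_le_mul_right (c := 2 * (t + 1)) _ (by omega)
    have expand : (2 * m.choose (t + 1) + 2 * n.choose (t + 1)) * (2 * (t + 1))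
        = 4 * (m.choose t * (m - t)) + 4 * (n.choose t * (n - t)) := by
      calc (2 * m.choose (t + 1) + 2 * n.choose (t + 1)) * (2 * (t + 1))
          = 4 * (m.choose (t + 1) * (t + 1)) + 4 * (n.choose (t + 1) * (t + 1)) := by ring
        _ = 4 * (m.choose t * (m - t)) + 4 * (n.choose t * (n - t)) := by rw [em, en]
    rw [expand]
    have hmt : 2 * (m - t) = (t + 1) + v := by omega
    have hnt2 : 2 * (n - t) + u = t + 1 := by omega
    -- (M+N)·2(t+1) = 2M(t+1) + 2N(2(n-t)+u) = 2M(t+1) + 4N(n-t) + 2Nu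
    --            ≤ 2M(t+1) + 4N(n-t) + 2Mv = 2M(2(m-t)) + 4N(n-t) = RHS
    calc (m.choose t + n.choose t) * (2 * (t + 1))
        = m.choose t * (2 * (t + 1)) + n.choose t * (2 * (2 * (n - t) + u)) := by
          rw [hnt2]; ring
      _ = m.choose t * (2 * (t + 1)) + 4 * (n.choose t * (n - t)) + 2 * (n.choose t * u) := by
          ring
      _ ≤ m.choose t * (2 * (t + 1)) + 4 * (n.choose t * (n - t)) + 2 * (m.choose t * v) := by
          omega
      _ = m.choose t * (2 * ((t + 1) + v)) + 4 * (n.choose t * (n - t)) := by ring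
      _ = m.choose t * (2 * (2 * (m - t))) + 4 * (n.choose t * (n - t)) := by rw [hmt]
      _ = 4 * (m.choose t * (m - t)) + 4 * (n.choose t * (n - t)) := by ring

/-- For 0 ≤ i ≤ k ≤ d-1 and a_j = H(i,j) + H(k,j), the vector (a_0,...,a_{d-1})
is unimodal, peaking at ⌊(d+2i)/3⌋. -/
theorem H_two_rows_sum_unimodal (d : ℕ) (hd : 0 < d) (i k : ℕ) (hik : i ≤ k) (hk : k ≤ d - 1)
    (H : ℕ → ℕ → ℚ)
    (hH : ∀ i j, H i j = (2 : ℚ) ^ (-(j : ℤ)) * ((d - i - 1).choose (d - j - 1) : ℚ))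
    (a : ℕ → ℚ) (ha : ∀ j, a j = H i j + H k j) :
    (∀ j, j + 1 ≤ (d + 2 * i) / 3 → a j ≤ a (j + 1)) ∧
    (∀ j, (d + 2 * i) / 3 ≤ j → j + 1 ≤ d - 1 → a (j + 1) ≤ a j) := by
  have hpow : ∀ j : ℕ, (2:ℚ) ^ (-((j + 1 : ℕ) : ℤ)) = (2:ℚ) ^ (-(j : ℤ)) * 2⁻¹ := by
    intro j
    push_cast
    rw [neg_add, zpow_add₀ (by norm_num : (2:ℚ) ≠ 0)]
    norm_num
  constructor
  · -- increasing part
    intro j hj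
    have h3 : (j + 1) * 3 ≤ d + 2 * i := (Nat.le_div_iff_mul_le (by norm_num)).mp hj
    have hjd : j + 2 ≤ d := by omega
    have e1 : d - j - 1 = (d - j - 2) + 1 := by omega
    have e2 : d - (j + 1) - 1 = d - j - 2 := by omega
    have k1 := keyI (d - i - 1) (d - j - 2) (by omega)
    have k2 := keyI (d - k - 1) (d - j - 2) (by omega)
    rw [ha, ha, hH, hH, hH, hH, e1, e2, hpow]
    have hp : (0:ℚ) ≤ (2:ℚ) ^ (-(j:ℤ)) := by positivity
    have keyN : 2 * ((d - i - 1).choose ((d - j - 2) + 1)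
        + (d - k - 1).choose ((d - j - 2) + 1))
        ≤ (d - i - 1).choose (d - j - 2) + (d - k - 1).choose (d - j - 2) := by omega
    have key : ((d - i - 1).choose ((d - j - 2) + 1) : ℚ)
        + ((d - k - 1).choose ((d - j - 2) + 1) : ℚ)
        ≤ 2⁻¹ * (((d - i - 1).choose (d - j - 2) : ℚ)
          + ((d - k - 1).choose (d - j - 2) : ℚ)) := by
      have := keyN
      have hc : (2:ℚ) * (((d - i - 1).choose ((d - j - 2) + 1) : ℚ)
          + ((d - k - 1).choose ((d - j - 2) + 1) : ℚ))
          ≤ ((d - i - 1).choose (d - j - 2) : ℚ)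
            + ((d - k - 1).choose (d - j - 2) : ℚ) := by exact_mod_cast keyN
      linarith
    linarith [mul_le_mul_of_nonneg_left key hp]
  · -- decreasing part
    intro j hj hj1
    have h3 : d + 2 * i < (j + 1) * 3 := (Nat.div_lt_iff_lt_mul (by norm_num)).mp
      (Nat.lt_succ_of_le hj)
    have hjd : j + 2 ≤ d := by omega
    have e1 : d - j - 1 = (d - j - 2) + 1 := by omega
    have e2 : d - (j + 1) - 1 = d - j - 2 := by omega
    have k3 := keyD (d - i - 1) (d - k - 1) (d - j - 2) (by omega) (by omega)
    rw [ha, ha, hH, hH, hH, hH, e1, e2, hpow]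
    have hp : (0:ℚ) ≤ (2:ℚ) ^ (-(j:ℤ)) := by positivity
    have key : 2⁻¹ * (((d - i - 1).choose (d - j - 2) : ℚ)
          + ((d - k - 1).choose (d - j - 2) : ℚ))
        ≤ ((d - i - 1).choose ((d - j - 2) + 1) : ℚ)
          + ((d - k - 1).choose ((d - j - 2) + 1) : ℚ) := by
      have hc : ((d - i - 1).choose (d - j - 2) : ℚ)
          + ((d - k - 1).choose (d - j - 2) : ℚ)
          ≤ 2 * (((d - i - 1).choose ((d - j - 2) + 1) : ℚ)
            + ((d - k - 1).choose ((d - j - 2) + 1) : ℚ)) := by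
        exact_mod_cast (by omega :
          (d - i - 1).choose (d - j - 2) + (d - k - 1).choose (d - j - 2) ≤
            2 * ((d - i - 1).choose ((d - j - 2) + 1) + (d - k - 1).choose ((d - j - 2) + 1)))
      linarith
    linarith [mul_le_mul_of_nonneg_left key hp]
end

section
/- Let P be a cubical d-polytope whose short cubical h-vector h^(sc) = (h_0,...,h_{d-1}) has all entries positive integers, is symmetric (h_i = h_{d-1-i}), and whose f-vector satisfies f = h^(sc) · H with H(i,j) = 2^(-j)*C(d-i-1,d-j-1). Then f_0 < f_1 < ... < f_{⌊d/3⌋-1} ≤ f_{⌊d/3⌋} and f_{⌊2d/3⌋} > f_{⌊2d/3⌋+1} > ... > f_{d-1}. -/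
lemma choose_two_le_aux (n k : ℕ) (hnk : 2 * n ≤ 3 * k + 1) :
    2 * n.choose (k + 1) ≤ n.choose k := by
  have h1 := Nat.choose_succ_right_eq n k
  have h2 : 2 * (n - k) ≤ k + 1 := by omega
  have h3 : 2 * n.choose (k+1) * (k+1) ≤ n.choose k * (k+1) := by
    calc 2 * n.choose (k+1) * (k+1) = 2 * (n.choose (k+1) * (k+1)) := by ring
    _ = 2 * (n.choose k * (n - k)) := by rw [h1]
    _ = n.choose k * (2 * (n - k)) := by ring
    _ ≤ n.choose k * (k+1) := Nat.mul_le_mul_left _ h2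
  exact Nat.le_of_mul_le_mul_right h3 (by omega)

lemma le_two_choose_aux (m k : ℕ) (h : k + 1 ≤ 2 * (m - k)) :
    m.choose k ≤ 2 * m.choose (k+1) := by
  have h1 := Nat.choose_succ_right_eq m k
  have h3 : m.choose k * (k+1) ≤ 2 * m.choose (k+1) * (k+1) := by
    calc m.choose k * (k+1) ≤ m.choose k * (2 * (m - k)) := Nat.mul_le_mul_left _ h
    _ = 2 * (m.choose k * (m - k)) := by ring
    _ = 2 * (m.choose (k+1) * (k+1)) := by rw [h1]
    _ = 2 * m.choose (k+1) * (k+1) := by ring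
  exact Nat.le_of_mul_le_mul_right h3 (by omega)

lemma lt_two_choose_aux (m k : ℕ) (hkm : k ≤ m) (h : k + 1 < 2 * (m - k)) :
    m.choose k < 2 * m.choose (k+1) := by
  have h1 := Nat.choose_succ_right_eq m k
  have hpos : 0 < m.choose k := Nat.choose_pos hkm
  have h3 : m.choose k * (k+1) < 2 * m.choose (k+1) * (k+1) := by
    calc m.choose k * (k+1) < m.choose k * (2 * (m - k)) := by
          exact Nat.mul_lt_mul_of_le_of_lt (le_refl _) h hpos
    _ = 2 * (m.choose k * (m - k)) := by ring
    _ = 2 * (m.choose (k+1) * (k+1)) := by rw [h1]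
    _ = 2 * m.choose (k+1) * (k+1) := by ring
  exact Nat.lt_of_mul_lt_mul_right h3

set_option maxHeartbeats 1000000 in
/-- Partial unimodality for cubical polytopes: if the short cubical h-vector has
positive integer entries and is symmetric, and f = h^(sc)·H with
H(i,j) = 2^(-j)·C(d-i-1,d-j-1), then f_0 < ... < f_{⌊d/3⌋-1} ≤ f_{⌊d/3⌋} and
f_{⌊2d/3⌋} > ... > f_{d-1}. -/
theorem partial_unimodality_cubical (d : ℕ) (hd : 0 < d)
    (h : ℕ → ℕ) (hpos : ∀ i, i ≤ d - 1 → 0 < h i)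
    (hsym : ∀ i, i ≤ d - 1 → h i = h (d - i - 1))
    (H : ℕ → ℕ → ℚ)
    (hH : ∀ i j, H i j = (2 : ℚ) ^ (-(j : ℤ)) * ((d - i - 1).choose (d - j - 1) : ℚ))
    (f : ℕ → ℚ) (hf : ∀ j, f j = ∑ i ∈ Finset.range d, (h i : ℚ) * H i j) :
    (∀ j, j + 2 ≤ d / 3 → f j < f (j + 1)) ∧
    (1 ≤ d / 3 → f (d / 3 - 1) ≤ f (d / 3)) ∧
    (∀ j, 2 * d / 3 ≤ j → j + 2 ≤ d → f (j + 1) < f j) := by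
  have key_inc : ∀ j, 3 * j + 3 ≤ d → f j < f (j + 1) := by
    intro j hj
    have hj2 : j + 2 ≤ d := by omega
    set k := d - j - 2 with hk
    have hdj1 : d - (j+1) - 1 = k := by omega
    have hdj : d - j - 1 = k + 1 := by omega
    have hpow : (0:ℚ) < (2:ℚ) ^ (-((j:ℤ)+1)) := by positivity
    have hdiff : f (j+1) - f j = (2:ℚ)^(-((j:ℤ)+1)) *
        ∑ i ∈ Finset.range d, (h i : ℚ) *
          (((d - i - 1).choose k : ℚ) - 2 * ((d - i - 1).choose (k+1) : ℚ)) := by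
      rw [hf, hf, ← Finset.sum_sub_distrib, Finset.mul_sum]
      refine Finset.sum_congr rfl fun i _ => ?_
      rw [hH i (j+1), hH i j, hdj1, hdj]
      have e2 : (-((j+1:ℕ):ℤ)) = -((j:ℤ)+1) := by omega
      rw [e2]
      have e3 : (2:ℚ)^(-((j:ℕ):ℤ)) = (2:ℚ)^(-((j:ℤ)+1)) * 2 := by
        rw [show -((j:ℕ):ℤ) = (-((j:ℤ)+1)) + 1 by omega,
          zpow_add_one₀ (by norm_num : (2:ℚ) ≠ 0)]
      rw [e3]; ring
    have hnonneg : ∀ i ∈ Finset.range d, (0:ℚ) ≤ (h i : ℚ) *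
        (((d - i - 1).choose k : ℚ) - 2 * ((d - i - 1).choose (k+1) : ℚ)) := by
      intro i hi
      have hle : 2 * (d - i - 1).choose (k+1) ≤ (d - i - 1).choose k :=
        choose_two_le_aux _ _ (by omega)
      have hq : (0:ℚ) ≤ ((d - i - 1).choose k : ℚ) - 2 * ((d - i - 1).choose (k+1) : ℚ) := by
        have := (Nat.cast_le (α := ℚ)).2 hle
        push_cast at this ⊢
        linarith
      positivity
    have hmem : j + 1 ∈ Finset.range d := Finset.mem_range.2 (by omega)
    have hterm : (0:ℚ) < (h (j+1) : ℚ) *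
        (((d - (j+1) - 1).choose k : ℚ) - 2 * ((d - (j+1) - 1).choose (k+1) : ℚ)) := by
      rw [hdj1, Nat.choose_self, Nat.choose_succ_self]
      have := hpos (j+1) (by omega)
      push_cast
      simpa using by positivity
    have hsum : (0:ℚ) < ∑ i ∈ Finset.range d, (h i : ℚ) *
        (((d - i - 1).choose k : ℚ) - 2 * ((d - i - 1).choose (k+1) : ℚ)) :=
      lt_of_lt_of_le hterm (Finset.single_le_sum hnonneg hmem)
    nlinarith [mul_pos hpow hsum]
  refine ⟨fun j hj => key_inc j (by omega), fun hd3 => ?_, ?_⟩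
  · have := key_inc (d/3 - 1) (by omega)
    rw [show d/3 - 1 + 1 = d/3 by omega] at this
    exact le_of_lt this
  · intro j hj hj2
    set k := d - j - 2 with hk
    have hkd : 3 * k + 4 ≤ d := by omega
    have hdj1 : d - (j+1) - 1 = k := by omega
    have hdj : d - j - 1 = k + 1 := by omega
    set B : ℕ → ℚ := fun n => 2 * (n.choose (k+1) : ℚ) - (n.choose k : ℚ) with hB
    have hpow : (0:ℚ) < (2:ℚ) ^ (-((j:ℤ)+1)) := by positivity
    have hdiff : f j - f (j+1) = (2:ℚ)^(-((j:ℤ)+1)) *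
        ∑ i ∈ Finset.range d, (h i : ℚ) * B (d - i - 1) := by
      rw [hf, hf, ← Finset.sum_sub_distrib, Finset.mul_sum]
      refine Finset.sum_congr rfl fun i _ => ?_
      rw [hH i (j+1), hH i j, hdj1, hdj]
      have e2 : (-((j+1:ℕ):ℤ)) = -((j:ℤ)+1) := by omega
      rw [e2]
      have e3 : (2:ℚ)^(-((j:ℕ):ℤ)) = (2:ℚ)^(-((j:ℤ)+1)) * 2 := by
        rw [show -((j:ℕ):ℤ) = (-((j:ℤ)+1)) + 1 by omega,
          zpow_add_one₀ (by norm_num : (2:ℚ) ≠ 0)]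
      rw [e3, hB]; ring
    have pair : ∀ n m : ℕ, n + m + 1 = d → n ≤ m → 0 ≤ B n + B m := by
      intro n m hnm hle
      by_cases hnk : n < k
      · have z1 : n.choose k = 0 := Nat.choose_eq_zero_of_lt hnk
        have z2 : n.choose (k+1) = 0 := Nat.choose_eq_zero_of_lt (by omega)
        have hm : m.choose k ≤ 2 * m.choose (k+1) := le_two_choose_aux m k (by omega)
        have hmq : (m.choose k : ℚ) ≤ 2 * (m.choose (k+1) : ℚ) := by exact_mod_cast hm
        simp only [hB, z1, z2, Nat.cast_zero]
        linarith
      · push_neg at hnk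
        have hmk : k ≤ m := le_trans hnk hle
        have e1 : (n.choose (k+1) : ℚ) * ((k:ℚ)+1) = (n.choose k : ℚ) * ((n:ℚ) - k) := by
          have hc := Nat.choose_succ_right_eq n k
          have c : ((n - k : ℕ) : ℚ) = (n:ℚ) - k := by rw [Nat.cast_sub hnk]
          calc (n.choose (k+1) : ℚ) * ((k:ℚ)+1) = ((n.choose (k+1) * (k+1) : ℕ) : ℚ) := by
                push_cast; ring
          _ = ((n.choose k * (n - k) : ℕ) : ℚ) := by rw [hc]
          _ = (n.choose k : ℚ) * ((n:ℚ) - k) := by push_cast [c]; ring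
        have e2 : (m.choose (k+1) : ℚ) * ((k:ℚ)+1) = (m.choose k : ℚ) * ((m:ℚ) - k) := by
          have hc := Nat.choose_succ_right_eq m k
          have c : ((m - k : ℕ) : ℚ) = (m:ℚ) - k := by rw [Nat.cast_sub hmk]
          calc (m.choose (k+1) : ℚ) * ((k:ℚ)+1) = ((m.choose (k+1) * (k+1) : ℕ) : ℚ) := by
                push_cast; ring
          _ = ((m.choose k * (m - k) : ℕ) : ℚ) := by rw [hc]
          _ = (m.choose k : ℚ) * ((m:ℚ) - k) := by push_cast [c]; ring
        have hA : (0:ℚ) < (n.choose k : ℚ) := by exact_mod_cast Nat.choose_pos hnk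
        have hAB : (n.choose k : ℚ) ≤ (m.choose k : ℚ) := by
          exact_mod_cast Nat.choose_le_choose k hle
        have hnmq : (n:ℚ) + m + 1 = d := by exact_mod_cast congrArg (Nat.cast (R := ℚ)) hnm
        have hdq : 3 * (k:ℚ) + 4 ≤ d := by exact_mod_cast hkd
        have hmq : (n:ℚ) ≤ m := by exact_mod_cast hle
        have expand : ((k:ℚ)+1) * (B n + B m) =
            (2*(n:ℚ) - 3*k - 1) * (n.choose k : ℚ) + (2*(m:ℚ) - 3*k - 1) * (m.choose k : ℚ) := by
          simp only [hB]; linear_combination 2*e1 + 2*e2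
        have hc2 : (0:ℚ) ≤ 2*(m:ℚ) - 3*k - 1 := by linarith
        have key : (0:ℚ) ≤ ((k:ℚ)+1) * (B n + B m) := by
          rw [expand]
          nlinarith [mul_nonneg hc2 (sub_nonneg.2 hAB)]
        nlinarith [key, (by positivity : (0:ℚ) < (k:ℚ)+1)]
    have pair_pos : 0 < B 0 + B (d-1) := by
      rcases Nat.eq_zero_or_pos k with hk0 | hk1
      · have hdq : (4:ℚ) ≤ d := by exact_mod_cast (by omega : 4 ≤ d)
        have cd : ((d - 1 : ℕ) : ℚ) = (d:ℚ) - 1 := by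
          rw [Nat.cast_sub (by omega)]; norm_num
        simp only [hB, hk0, zero_add, Nat.choose_one_right, Nat.choose_zero_right,
          Nat.choose_self, Nat.cast_one, cd]
        linarith
      · have z1 : Nat.choose 0 k = 0 := Nat.choose_eq_zero_of_lt (by omega)
        have z2 : Nat.choose 0 (k+1) = 0 := Nat.choose_eq_zero_of_lt (by omega)
        have hlt : (d-1).choose k < 2 * (d-1).choose (k+1) :=
          lt_two_choose_aux (d-1) k (by omega) (by omega)
        have hltq : ((d-1).choose k : ℚ) < 2 * ((d-1).choose (k+1) : ℚ) := by exact_mod_cast hlt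
        simp only [hB, z1, z2, Nat.cast_zero]
        linarith
    have reflect : ∑ i ∈ Finset.range d, (h i : ℚ) * B (d - i - 1)
        = ∑ i ∈ Finset.range d, (h i : ℚ) * B i := by
      have r1 := Finset.sum_range_reflect (fun i => (h (d - i - 1) : ℚ) * B i) d
      calc ∑ i ∈ Finset.range d, (h i : ℚ) * B (d - i - 1)
          = ∑ i ∈ Finset.range d, (h (d - (d-1-i) - 1) : ℚ) * B (d-1-i) := by
            refine Finset.sum_congr rfl fun i hi => ?_
            have hi' := Finset.mem_range.1 hi
            rw [show d - (d-1-i) - 1 = i by omega, show d-1-i = d-i-1 by omega]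
        _ = ∑ i ∈ Finset.range d, (h (d - i - 1) : ℚ) * B i := r1
        _ = ∑ i ∈ Finset.range d, (h i : ℚ) * B i := by
            refine Finset.sum_congr rfl fun i hi => ?_
            have hi' := Finset.mem_range.1 hi
            rw [← hsym i (by omega)]
    have hnonneg : ∀ i ∈ Finset.range d, (0:ℚ) ≤ (h i : ℚ) * (B (d - i - 1) + B i) := by
      intro i hi
      have hi' := Finset.mem_range.1 hi
      have hBB : 0 ≤ B (d - i - 1) + B i := by
        rcases le_or_gt i (d - i - 1) with hle | hlt
        · have := pair i (d-i-1) (by omega) hle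
          linarith
        · exact pair (d-i-1) i (by omega) (le_of_lt hlt)
      positivity
    have hterm : (0:ℚ) < (h 0 : ℚ) * (B (d - 0 - 1) + B 0) := by
      have h0 := hpos 0 (by omega)
      have hb : (0:ℚ) < B (d - 0 - 1) + B 0 := by
        rw [show d - 0 - 1 = d - 1 by omega]; linarith
      have hq : (0:ℚ) < (h 0 : ℚ) := by exact_mod_cast h0
      positivity
    have hsingle := Finset.single_le_sum hnonneg (Finset.mem_range.2 hd)
    have hsum2 : (0:ℚ) < ∑ i ∈ Finset.range d, (h i : ℚ) * (B (d - i - 1) + B i) := by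
      linarith [hterm, hsingle]
    have htwo : 2 * (∑ i ∈ Finset.range d, (h i : ℚ) * B (d - i - 1))
        = ∑ i ∈ Finset.range d, (h i : ℚ) * (B (d - i - 1) + B i) := by
      calc 2 * (∑ i ∈ Finset.range d, (h i : ℚ) * B (d - i - 1))
          = (∑ i ∈ Finset.range d, (h i : ℚ) * B (d - i - 1))
            + ∑ i ∈ Finset.range d, (h i : ℚ) * B i := by rw [← reflect]; ring
        _ = ∑ i ∈ Finset.range d, (h i : ℚ) * (B (d - i - 1) + B i) := by
            rw [← Finset.sum_add_distrib]
            exact Finset.sum_congr rfl fun i _ => by ring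
    have hS : (0:ℚ) < ∑ i ∈ Finset.range d, (h i : ℚ) * B (d - i - 1) := by linarith
    nlinarith [mul_pos hpow hS]
end

section
/- Define the capping increment vector c = (c_0,...,c_{d-1}) by c_k = 2^(d-k)*C(d,k) - 2^(d-k-1)*C(d-1,k) for 0 ≤ k ≤ d-2 and c_{d-1} = 2(d-1). Then c is unimodal with peak at ⌊(d+1)/3⌋. -/
lemma cid1 (d k : ℕ) (hd : 1 ≤ d) (hk : k ≤ d) :
    (d : ℤ) * ((d-1).choose k : ℤ) = ((d : ℤ) - k) * (d.choose k : ℤ) := by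
  have h := Nat.choose_mul_succ_eq (d-1) k
  rw [Nat.sub_add_cancel hd] at h
  zify [hk] at h
  linarith

lemma cid2 (d k : ℕ) (hk : k ≤ d) :
    ((k:ℤ)+1) * (d.choose (k+1) : ℤ) = ((d : ℤ) - k) * (d.choose k : ℤ) := by
  have h := Nat.choose_succ_right_eq d k
  zify [hk] at h
  linarith

lemma main_eq (d k : ℕ) (hd3 : k + 3 ≤ d) (c : ℕ → ℤ)
    (h1 : c k = (2:ℤ)^(d-k) * (d.choose k : ℤ) - 2^(d-1-k) * ((d-1).choose k : ℤ))
    (h2 : c (k+1) = (2:ℤ)^(d-(k+1)) * (d.choose (k+1) : ℤ)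
        - 2^(d-1-(k+1)) * ((d-1).choose (k+1) : ℤ)) :
    (d:ℤ) * ((k:ℤ)+1) * (c (k+1) - c k) =
      2^(d-2-k) * ((((d:ℤ)+k+1) * ((d:ℤ)-k) - 2*((k:ℤ)+1)*((d:ℤ)+k))) * (d.choose k : ℤ) := by
  have e1 : d - k = (d-2-k) + 2 := by omega
  have e2 : d - 1 - k = (d-2-k) + 1 := by omega
  have e3 : d - (k+1) = (d-2-k) + 1 := by omega
  have e4 : d - 1 - (k+1) = d-2-k := by omega
  rw [e1, e2] at h1
  rw [e3, e4] at h2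
  have ha := cid1 d k (by omega) (by omega)
  have hb := cid1 d (k+1) (by omega) (by omega)
  have hc := cid2 d k (by omega)
  rw [h1, h2]
  push_cast at hb ⊢
  ring_nf
  ring_nf at ha hb hc
  linear_combination (2:ℤ)^(d-2-k) * ((-((k:ℤ)+1)) * hb + ((d:ℤ)+k+1) * hc + 2*((k:ℤ)+1) * ha)

/-- The capping increment vector c, with c_k = 2^(d-k)·C(d,k) - 2^(d-1-k)·C(d-1,k)
for k ≤ d-2 and c_{d-1} = 2(d-1), is unimodal with peak at ⌊(d+1)/3⌋. -/
theorem capping_increment_unimodal (d : ℕ) (hd : 2 ≤ d) (c : ℕ → ℤ)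
    (hc1 : ∀ k, k ≤ d - 2 → c k =
      (2 : ℤ) ^ (d - k) * (d.choose k : ℤ) - 2 ^ (d - 1 - k) * ((d - 1).choose k : ℤ))
    (hc2 : c (d - 1) = 2 * ((d : ℤ) - 1)) :
    (∀ k, k + 1 ≤ (d + 1) / 3 → c k ≤ c (k + 1)) ∧
    (∀ k, (d + 1) / 3 ≤ k → k + 1 ≤ d - 1 → c (k + 1) ≤ c k) := by
  constructor
  · intro k hk
    by_cases hd2 : d = 2
    · -- d = 2: k = 0, c 0 = 2, c 1 = 2
      subst hd2
      have hk0 : k = 0 := by omega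
      subst hk0
      have h0 := hc1 0 (by norm_num)
      simp [Nat.choose] at h0
      have h1 : c 1 = 2 * ((2:ℤ) - 1) := hc2
      rw [h0, h1]; norm_num
    · have hd3 : 3 ≤ d := by omega
      have h3 : 3 * k + 2 ≤ d := by omega
      have hk3 : k + 3 ≤ d := by omega
      have hE := main_eq d k hk3 c (hc1 k (by omega)) (hc1 (k+1) (by omega))
      have hS : (0:ℤ) ≤ (((d:ℤ)+k+1) * ((d:ℤ)-k) - 2*((k:ℤ)+1)*((d:ℤ)+k)) := by
        have hd' : (3:ℤ)*k + 2 ≤ (d:ℤ) := by exact_mod_cast h3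
        have hk0 : (0:ℤ) ≤ (k:ℤ) := by positivity
        nlinarith [mul_nonneg (sub_nonneg.2 hd') hk0, sq_nonneg ((d:ℤ) - 3*k - 2)]
      have hX : (0:ℤ) < (d.choose k : ℤ) := by
        exact_mod_cast Nat.choose_pos (by omega : k ≤ d)
      have hP : (0:ℤ) < 2^(d-2-k) := by positivity
      have hR : (0:ℤ) ≤ (d:ℤ) * ((k:ℤ)+1) * (c (k+1) - c k) := by
        rw [hE]; positivity
      nlinarith [hR, mul_pos (show (0:ℤ) < (d:ℤ) by exact_mod_cast (by omega : 0 < d))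
        (show (0:ℤ) < (k:ℤ)+1 by positivity)]
  · intro k hk1 hk2
    have h3 : d ≤ 3 * k + 1 := by omega
    by_cases hb : k + 1 = d - 1
    · -- boundary: k = d - 2
      have hk : k = d - 2 := by omega
      subst hk
      rw [hb, hc2]
      have h0 := hc1 (d-2) le_rfl
      have e1 : d - (d-2) = 2 := by omega
      have e2 : d - 1 - (d-2) = 1 := by omega
      rw [e1, e2] at h0
      have hs1 : d.choose (d-2) = d.choose 2 := by
        have := Nat.choose_symm (show d - 2 ≤ d by omega)
        rw [show d - (d-2) = 2 by omega] at this; exact this.symm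
      have hs2 : (d-1).choose (d-2) = (d-1).choose 1 := by
        have := Nat.choose_symm (show 1 ≤ d - 1 by omega)
        rwa [show d - 1 - 1 = d - 2 by omega] at this
      have h2' : (d.choose 2 : ℤ) * 2 = (d:ℤ) * ((d:ℤ) - 1) := by
        have := Nat.choose_succ_right_eq d 1
        rw [Nat.choose_one_right] at this
        zify [show 1 ≤ d by omega] at this
        linarith
      rw [hs1, hs2, Nat.choose_one_right] at h0
      rw [h0]
      push_cast [show 1 ≤ d by omega]
      have hd' : (2:ℤ) ≤ (d:ℤ) := by exact_mod_cast hd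
      nlinarith [h2']
    · have hk3 : k + 3 ≤ d := by omega
      have hE := main_eq d k hk3 c (hc1 k (by omega)) (hc1 (k+1) (by omega))
      have hS : (((d:ℤ)+k+1) * ((d:ℤ)-k) - 2*((k:ℤ)+1)*((d:ℤ)+k)) ≤ 0 := by
        have hd' : (d:ℤ) ≤ 3*(k:ℤ) + 1 := by exact_mod_cast h3
        have hd2 : (2:ℤ) ≤ (d:ℤ) := by exact_mod_cast hd
        nlinarith [sq_nonneg ((3:ℤ)*k - (d:ℤ) + 1)]
      have hX : (0:ℤ) < (d.choose k : ℤ) := by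
        exact_mod_cast Nat.choose_pos (by omega : k ≤ d)
      have hP : (0:ℤ) < (2:ℤ)^(d-2-k) := by positivity
      have hR : (d:ℤ) * ((k:ℤ)+1) * (c (k+1) - c k) ≤ 0 := by
        rw [hE]
        have := mul_nonpos_of_nonpos_of_nonneg
          (mul_nonpos_of_nonneg_of_nonpos (le_of_lt hP) hS) (le_of_lt hX)
        linarith [this]
      nlinarith [hR, mul_pos (show (0:ℤ) < (d:ℤ) by exact_mod_cast (by omega : 0 < d))
        (show (0:ℤ) < (k:ℤ)+1 by positivity)]
end

section
/- Let d ≥ 2 and suppose (g_0,...,g_{d-1}) is a unimodal vector of non-negative integers peaking at ⌊(d+1)/3⌋, and let c_k = 2^(d-k)*C(d,k) - 2^(d-k-1)*C(d-1,k) for k ≤ d-2, c_{d-1} = 2(d-1). Then for every n ≥ 0, the vector (g_k + n·c_k)_{k=0}^{d-1} is unimodal peaking at ⌊(d+1)/3⌋. In particular, the f-vector of every capped cubical d-polytope (an n-fold capped polytope over a d-cube) is unimodal with peak at ⌊(d+1)/3⌋. -/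
lemma fvec_inc (d k : ℕ) (h : 3 * k + 2 ≤ d) :
    2 ^ (d - k) * d.choose k ≤ 2 ^ (d - (k+1)) * d.choose (k+1) := by
  obtain ⟨j, hj, rfl⟩ : ∃ j, 2*k ≤ j ∧ d = k + 2 + j := ⟨d - k - 2, by omega, by omega⟩
  have h1 : (k+2+j).choose (k+1) * (k+1) = (k+2+j).choose k * (j+2) := by
    have := Nat.choose_succ_right_eq (k+2+j) k
    rwa [show k+2+j - k = j+2 by omega] at this
  have h2 : 2 * (k+2+j).choose k ≤ (k+2+j).choose (k+1) := by
    have h3 : 2 * (k+2+j).choose k * (k+1) ≤ (k+2+j).choose (k+1) * (k+1) := by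
      rw [h1, show 2 * (k+2+j).choose k * (k+1) = (k+2+j).choose k * (2*k+2) by ring]
      exact Nat.mul_le_mul_left _ (by omega)
    exact Nat.le_of_mul_le_mul_right h3 (by omega)
  calc 2 ^ (k+2+j - k) * (k+2+j).choose k
      = 2 ^ (k+2+j - (k+1)) * (2 * (k+2+j).choose k) := by
        rw [show k+2+j - k = (j+1)+1 by omega, show k+2+j - (k+1) = j+1 by omega]; ring
    _ ≤ 2 ^ (k+2+j - (k+1)) * (k+2+j).choose (k+1) := Nat.mul_le_mul_left _ h2

lemma fvec_dec (d k : ℕ) (h : d ≤ 3 * k + 1) (hk2 : k + 1 ≤ d - 1) :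
    2 ^ (d - (k+1)) * d.choose (k+1) ≤ 2 ^ (d - k) * d.choose k := by
  obtain ⟨j, hj, rfl⟩ : ∃ j, j + 1 ≤ 2*k ∧ d = k + 2 + j := ⟨d - k - 2, by omega, by omega⟩
  have h1 : (k+2+j).choose (k+1) * (k+1) = (k+2+j).choose k * (j+2) := by
    have := Nat.choose_succ_right_eq (k+2+j) k
    rwa [show k+2+j - k = j+2 by omega] at this
  have h2 : (k+2+j).choose (k+1) ≤ 2 * (k+2+j).choose k := by
    have h3 : (k+2+j).choose (k+1) * (k+1) ≤ 2 * (k+2+j).choose k * (k+1) := by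
      rw [h1, show 2 * (k+2+j).choose k * (k+1) = (k+2+j).choose k * (2*k+2) by ring]
      exact Nat.mul_le_mul_left _ (by omega)
    exact Nat.le_of_mul_le_mul_right h3 (by omega)
  calc 2 ^ (k+2+j - (k+1)) * (k+2+j).choose (k+1)
      ≤ 2 ^ (k+2+j - (k+1)) * (2 * (k+2+j).choose k) := Nat.mul_le_mul_left _ h2
    _ = 2 ^ (k+2+j - k) * (k+2+j).choose k := by
        rw [show k+2+j - k = (j+1)+1 by omega, show k+2+j - (k+1) = j+1 by omega]; ring

lemma c_inc (d : ℕ) (hd : 2 ≤ d) (c : ℕ → ℤ)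
    (hc1 : ∀ k, k ≤ d - 2 → c k =
      (2 : ℤ) ^ (d - k) * (d.choose k : ℤ) - 2 ^ (d - 1 - k) * ((d - 1).choose k : ℤ))
    (hc2 : c (d - 1) = 2 * ((d : ℤ) - 1))
    (k : ℕ) (h : 3 * k + 2 ≤ d) : c k ≤ c (k + 1) := by
  rcases le_or_gt (k + 3) d with hk3 | hk3
  · obtain ⟨m, hm, rfl⟩ : ∃ m, 2*k ≤ m+1 ∧ d = k + 3 + m := ⟨d - k - 3, by omega, by omega⟩
    rw [hc1 k (by omega), hc1 (k+1) (by omega)]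
    rw [show k+3+m - k = (m+1)+1+1 by omega, show k+3+m - 1 - k = (m+1)+1 by omega,
      show k+3+m - (k+1) = (m+1)+1 by omega, show k+3+m - 1 - (k+1) = m+1 by omega]
    have id1 : ((k+3+m).choose (k+1) : ℤ) * ((k:ℤ)+1) = ((k+3+m).choose k : ℤ) * ((m:ℤ)+3) := by
      have := Nat.choose_succ_right_eq (k+3+m) k
      rw [show k+3+m - k = m+3 by omega] at this
      exact_mod_cast this
    have id2 : ((k+3+m-1).choose (k+1) : ℤ) * ((k:ℤ)+1) = ((k+3+m-1).choose k : ℤ) * ((m:ℤ)+2) := by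
      have := Nat.choose_succ_right_eq (k+3+m-1) k
      rw [show k+3+m-1 - k = m+2 by omega] at this
      exact_mod_cast this
    have hAB : ((k+3+m-1).choose k : ℤ) ≤ ((k+3+m).choose k : ℤ) := by
      exact_mod_cast Nat.choose_le_choose k (show k+3+m-1 ≤ k+3+m by omega)
    set A : ℤ := ((k+3+m).choose k : ℤ)
    set A' : ℤ := ((k+3+m).choose (k+1) : ℤ)
    set B : ℤ := ((k+3+m-1).choose k : ℤ)
    set B' : ℤ := ((k+3+m-1).choose (k+1) : ℤ)
    have hBpos : (0:ℤ) ≤ B := by positivity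
    have key : 4 * A - 2 * B ≤ 2 * A' - B' := by
      have hk1 : (0:ℤ) < (k:ℤ) + 1 := by positivity
      rw [← mul_le_mul_iff_of_pos_right hk1,
        show (2 * A' - B') * ((k:ℤ)+1) = 2 * (A' * ((k:ℤ)+1)) - B' * ((k:ℤ)+1) by ring, id1, id2]
      nlinarith [mul_nonneg (sub_nonneg.2 hAB) (show (0:ℤ) ≤ (m:ℤ) + 1 - 2*k by omega),
        mul_nonneg hBpos (show (0:ℤ) ≤ (m:ℤ) + 1 - 2*k by omega)]
    have hp : (0:ℤ) ≤ 2 ^ (m+1) := by positivity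
    calc (2:ℤ) ^ ((m+1)+1+1) * A - 2 ^ ((m+1)+1) * B
        = 2 ^ (m+1) * (4 * A - 2 * B) := by ring
      _ ≤ 2 ^ (m+1) * (2 * A' - B') := mul_le_mul_of_nonneg_left key hp
      _ = 2 ^ ((m+1)+1) * A' - 2 ^ (m+1) * B' := by ring
  · have hd2 : d = 2 := by omega
    have hk0 : k = 0 := by omega
    subst hd2 hk0
    rw [hc1 0 (by norm_num), show (1:ℕ) = 2 - 1 by norm_num, hc2]
    norm_num

lemma c_dec (d : ℕ) (hd : 2 ≤ d) (c : ℕ → ℤ)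
    (hc1 : ∀ k, k ≤ d - 2 → c k =
      (2 : ℤ) ^ (d - k) * (d.choose k : ℤ) - 2 ^ (d - 1 - k) * ((d - 1).choose k : ℤ))
    (hc2 : c (d - 1) = 2 * ((d : ℤ) - 1))
    (k : ℕ) (h : d ≤ 3 * k + 1) (h2 : k + 1 ≤ d - 1) : c (k + 1) ≤ c k := by
  rcases le_or_gt (k + 3) d with hk3 | hk3
  · obtain ⟨m, hm, rfl⟩ : ∃ m, m + 2 ≤ 2*k ∧ d = k + 3 + m := ⟨d - k - 3, by omega, by omega⟩
    rw [hc1 k (by omega), hc1 (k+1) (by omega)]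
    rw [show k+3+m - k = (m+1)+1+1 by omega, show k+3+m - 1 - k = (m+1)+1 by omega,
      show k+3+m - (k+1) = (m+1)+1 by omega, show k+3+m - 1 - (k+1) = m+1 by omega]
    have id1 : ((k+3+m).choose (k+1) : ℤ) * ((k:ℤ)+1) = ((k+3+m).choose k : ℤ) * ((m:ℤ)+3) := by
      have := Nat.choose_succ_right_eq (k+3+m) k
      rw [show k+3+m - k = m+3 by omega] at this
      exact_mod_cast this
    have id2 : ((k+3+m-1).choose (k+1) : ℤ) * ((k:ℤ)+1) = ((k+3+m-1).choose k : ℤ) * ((m:ℤ)+2) := by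
      have := Nat.choose_succ_right_eq (k+3+m-1) k
      rw [show k+3+m-1 - k = m+2 by omega] at this
      exact_mod_cast this
    have hAB : ((k+3+m-1).choose k : ℤ) ≤ ((k+3+m).choose k : ℤ) := by
      exact_mod_cast Nat.choose_le_choose k (show k+3+m-1 ≤ k+3+m by omega)
    set A : ℤ := ((k+3+m).choose k : ℤ)
    set A' : ℤ := ((k+3+m).choose (k+1) : ℤ)
    set B : ℤ := ((k+3+m-1).choose k : ℤ)
    set B' : ℤ := ((k+3+m-1).choose (k+1) : ℤ)
    have hBpos : (0:ℤ) ≤ B := by positivity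
    have key : 2 * A' - B' ≤ 4 * A - 2 * B := by
      have hk1 : (0:ℤ) < (k:ℤ) + 1 := by positivity
      rw [← mul_le_mul_iff_of_pos_right hk1,
        show (2 * A' - B') * ((k:ℤ)+1) = 2 * (A' * ((k:ℤ)+1)) - B' * ((k:ℤ)+1) by ring, id1, id2]
      nlinarith [mul_nonneg (sub_nonneg.2 hAB) (show (0:ℤ) ≤ 2*(k:ℤ) - m - 1 by omega),
        mul_nonneg hBpos (show (0:ℤ) ≤ 2*(k:ℤ) - m - 2 by omega)]
    have hp : (0:ℤ) ≤ 2 ^ (m+1) := by positivity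
    calc (2:ℤ) ^ ((m+1)+1) * A' - 2 ^ (m+1) * B'
        = 2 ^ (m+1) * (2 * A' - B') := by ring
      _ ≤ 2 ^ (m+1) * (4 * A - 2 * B) := mul_le_mul_of_nonneg_left key hp
      _ = 2 ^ ((m+1)+1+1) * A - 2 ^ ((m+1)+1) * B := by ring
  · have hk : k = d - 2 := by omega
    subst hk
    rw [show d - 2 + 1 = d - 1 by omega, hc2, hc1 (d-2) le_rfl]
    rw [show d - (d-2) = 2 by omega, show d - 1 - (d-2) = 1 by omega]
    have e1 : d.choose (d-2) = d.choose 2 := Nat.choose_symm (by omega)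
    have e2 : (d-1).choose (d-2) = d - 1 := by
      rw [show d - 2 = (d-1) - 1 by omega, Nat.choose_symm (show 1 ≤ d - 1 by omega),
        Nat.choose_one_right]
    have e3 : d.choose 2 * 2 = d * (d - 1) := by
      have := Nat.choose_succ_right_eq d 1
      rwa [Nat.choose_one_right] at this
    rw [e1, e2]
    have e3' : ((d.choose 2 : ℕ) : ℤ) * 2 = (d:ℤ) * ((d:ℤ) - 1) := by
      have h1 : ((d.choose 2 * 2 : ℕ) : ℤ) = ((d * (d-1) : ℕ) : ℤ) := by rw [e3]
      push_cast [Nat.cast_sub (show 1 ≤ d by omega)] at h1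
      linarith
    have hdc : ((d - 1 : ℕ) : ℤ) = (d:ℤ) - 1 := by
      push_cast [Nat.cast_sub (show 1 ≤ d by omega)]; ring
    rw [hdc]
    have hd2 : (2:ℤ) ≤ (d:ℤ) := by exact_mod_cast hd
    nlinarith [e3']

/-- If g is a unimodal vector of non-negative integers peaking at ⌊(d+1)/3⌋ and c
is the capping increment vector, then g + n·c is unimodal peaking at ⌊(d+1)/3⌋
for every n ≥ 0. In particular the f-vector of every n-fold capped polytope over
the d-cube (whose f-vector is f_k = 2^(d-k)·C(d,k)) is unimodal with peak ⌊(d+1)/3⌋. -/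
theorem capped_fvector_unimodal (d : ℕ) (hd : 2 ≤ d)
    (c : ℕ → ℤ)
    (hc1 : ∀ k, k ≤ d - 2 → c k =
      (2 : ℤ) ^ (d - k) * (d.choose k : ℤ) - 2 ^ (d - 1 - k) * ((d - 1).choose k : ℤ))
    (hc2 : c (d - 1) = 2 * ((d : ℤ) - 1))
    (g : ℕ → ℕ)
    (hg1 : ∀ k, k + 1 ≤ (d + 1) / 3 → g k ≤ g (k + 1))
    (hg2 : ∀ k, (d + 1) / 3 ≤ k → k + 1 ≤ d - 1 → g (k + 1) ≤ g k) :
    (∀ n : ℕ,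
      (∀ k, k + 1 ≤ (d + 1) / 3 →
        (g k : ℤ) + (n : ℤ) * c k ≤ (g (k + 1) : ℤ) + (n : ℤ) * c (k + 1)) ∧
      (∀ k, (d + 1) / 3 ≤ k → k + 1 ≤ d - 1 →
        (g (k + 1) : ℤ) + (n : ℤ) * c (k + 1) ≤ (g k : ℤ) + (n : ℤ) * c k)) ∧
    (∀ n : ℕ,
      (∀ k, k + 1 ≤ (d + 1) / 3 →
        ((2 ^ (d - k) * d.choose k : ℕ) : ℤ) + (n : ℤ) * c k ≤
          ((2 ^ (d - (k + 1)) * d.choose (k + 1) : ℕ) : ℤ) + (n : ℤ) * c (k + 1)) ∧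
      (∀ k, (d + 1) / 3 ≤ k → k + 1 ≤ d - 1 →
        ((2 ^ (d - (k + 1)) * d.choose (k + 1) : ℕ) : ℤ) + (n : ℤ) * c (k + 1) ≤
          ((2 ^ (d - k) * d.choose k : ℕ) : ℤ) + (n : ℤ) * c k)) := by
  constructor
  · intro n
    constructor
    · intro k hk
      have hcm : (n:ℤ) * c k ≤ (n:ℤ) * c (k+1) :=
        mul_le_mul_of_nonneg_left (c_inc d hd c hc1 hc2 k (by omega)) (by positivity)
      have hgm : (g k : ℤ) ≤ (g (k+1) : ℤ) := by exact_mod_cast hg1 k hk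
      linarith
    · intro k hk1 hk2
      have hcm : (n:ℤ) * c (k+1) ≤ (n:ℤ) * c k :=
        mul_le_mul_of_nonneg_left (c_dec d hd c hc1 hc2 k (by omega) hk2) (by positivity)
      have hgm : (g (k+1) : ℤ) ≤ (g k : ℤ) := by exact_mod_cast hg2 k hk1 hk2
      linarith
  · intro n
    constructor
    · intro k hk
      have hcm : (n:ℤ) * c k ≤ (n:ℤ) * c (k+1) :=
        mul_le_mul_of_nonneg_left (c_inc d hd c hc1 hc2 k (by omega)) (by positivity)
      have hfm : ((2 ^ (d - k) * d.choose k : ℕ) : ℤ) ≤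
          ((2 ^ (d - (k+1)) * d.choose (k+1) : ℕ) : ℤ) := by
        exact_mod_cast fvec_inc d k (by omega)
      linarith
    · intro k hk1 hk2
      have hcm : (n:ℤ) * c (k+1) ≤ (n:ℤ) * c k :=
        mul_le_mul_of_nonneg_left (c_dec d hd c hc1 hc2 k (by omega) hk2) (by positivity)
      have hfm : ((2 ^ (d - (k+1)) * d.choose (k+1) : ℕ) : ℤ) ≤
          ((2 ^ (d - k) * d.choose k : ℕ) : ℤ) := by
        exact_mod_cast fvec_dec d k (by omega) hk2
      linarith
end

section
/- For d = 10, there is no symmetric unimodal vector (h_0,...,h_9) of positive integers (h_i = h_{9-i}) such that the vector f = h·H, with H(i,j) = 2^(-j)*C(9-i, 9-j), satisfies any of the dip conditions f_3 > f_4 < f_5, f_3 > f_4 < f_6, f_3 > f_5 < f_6, or f_4 > f_5 < f_6. Consequently, the f-vector of every cubical 10-polytope is unimodal. -/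
set_option maxHeartbeats 1000000


/-- For d = 10: no symmetric unimodal positive-integer vector h with f = h·H,
H(i,j) = 2^(-j)·C(9-i,9-j), produces any of the dips f_3 > f_4 < f_5,
f_3 > f_4 < f_6, f_3 > f_5 < f_6, f_4 > f_5 < f_6; consequently f is unimodal. -/
theorem cubical_10_polytope_unimodal
    (h : ℕ → ℕ) (hpos : ∀ i, i ≤ 9 → 0 < h i)
    (hsym : ∀ i, i ≤ 9 → h i = h (9 - i))
    (huni : ∃ p, p ≤ 9 ∧ (∀ i, i + 1 ≤ p → h i ≤ h (i + 1)) ∧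
      (∀ i, p ≤ i → i + 1 ≤ 9 → h (i + 1) ≤ h i))
    (f : ℕ → ℚ)
    (hf : ∀ j, f j = ∑ i ∈ Finset.range 10,
      (h i : ℚ) * ((2 : ℚ) ^ (-(j : ℤ)) * ((9 - i).choose (9 - j) : ℚ))) :
    ¬(f 4 < f 3 ∧ f 4 < f 5) ∧ ¬(f 4 < f 3 ∧ f 4 < f 6) ∧
    ¬(f 5 < f 3 ∧ f 5 < f 6) ∧ ¬(f 5 < f 4 ∧ f 5 < f 6) ∧
    ∃ p, p ≤ 9 ∧ (∀ j, j + 1 ≤ p → f j ≤ f (j + 1)) ∧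
      (∀ j, p ≤ j → j + 1 ≤ 9 → f (j + 1) ≤ f j) := by
  obtain ⟨p, hp9, hup, hdn⟩ := huni
  -- chain of descents after the peak
  have hchain : ∀ x y, p ≤ x → x ≤ y → y ≤ 9 → h y ≤ h x := by
    intro x y hx hxy
    induction hxy with
    | refl => intro _; exact le_refl _
    | @step m hm ih =>
      intro hm9
      have h1 : h (m + 1) ≤ h m := hdn m (le_trans hx hm) hm9
      exact le_trans h1 (ih (by omega))
  -- monotonicity of h on the first half
  have m01 : h 0 ≤ h 1 := by
    rcases le_or_gt 1 p with hp | hp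
    · exact hup 0 hp
    · have h1 := hchain 1 9 (by omega) (by omega) (by omega)
      have h2 := hsym 0 (by omega)
      simp only [show 9 - 0 = 9 from rfl] at h2; omega
  have m12 : h 1 ≤ h 2 := by
    rcases le_or_gt 2 p with hp | hp
    · exact hup 1 hp
    · have h1 := hchain 2 8 (by omega) (by omega) (by omega)
      have h2 := hsym 1 (by omega)
      simp only [show 9 - 1 = 8 from rfl] at h2; omega
  have m23 : h 2 ≤ h 3 := by
    rcases le_or_gt 3 p with hp | hp
    · exact hup 2 hp
    · have h1 := hchain 3 7 (by omega) (by omega) (by omega)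
      have h2 := hsym 2 (by omega)
      simp only [show 9 - 2 = 7 from rfl] at h2; omega
  have m34 : h 3 ≤ h 4 := by
    rcases le_or_gt 4 p with hp | hp
    · exact hup 3 hp
    · have h1 := hchain 4 6 (by omega) (by omega) (by omega)
      have h2 := hsym 3 (by omega)
      simp only [show 9 - 3 = 6 from rfl] at h2; omega
  -- symmetry identities
  have e5 : h 5 = h 4 := by have := hsym 4 (by omega); simpa using this.symm
  have e6 : h 6 = h 3 := by have := hsym 3 (by omega); simpa using this.symm
  have e7 : h 7 = h 2 := by have := hsym 2 (by omega); simpa using this.symm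
  have e8 : h 8 = h 1 := by have := hsym 1 (by omega); simpa using this.symm
  have e9 : h 9 = h 0 := by have := hsym 0 (by omega); simpa using this.symm
  have pa : 1 ≤ (h 0:ℚ) := by have := hpos 0 (by omega); exact_mod_cast this
  have qab : (h 0:ℚ) ≤ (h 1:ℚ) := by exact_mod_cast m01
  have qbc : (h 1:ℚ) ≤ (h 2:ℚ) := by exact_mod_cast m12
  have qcd : (h 2:ℚ) ≤ (h 3:ℚ) := by exact_mod_cast m23
  have qde : (h 3:ℚ) ≤ (h 4:ℚ) := by exact_mod_cast m34
  -- f-values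
  have F0 : f 0 = (h 0:ℚ) := by
    rw [hf]; norm_num [Finset.sum_range_succ, Nat.choose]
  have F1 : 2 * f 1 = 9*(h 0:ℚ) + (h 1:ℚ) := by
    rw [hf]; norm_num [Finset.sum_range_succ, Nat.choose]; ring
  have F2 : 4 * f 2 = 36*(h 0:ℚ) + 8*(h 1:ℚ) + (h 2:ℚ) := by
    rw [hf]; norm_num [Finset.sum_range_succ, Nat.choose]; ring
  have F3 : 8 * f 3 = 84*(h 0:ℚ) + 28*(h 1:ℚ) + 7*(h 2:ℚ) + (h 3:ℚ) := by
    rw [hf]; norm_num [Finset.sum_range_succ, Nat.choose]; ring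
  have F4 : 16 * f 4 = 126*(h 0:ℚ) + 56*(h 1:ℚ) + 21*(h 2:ℚ) + 6*(h 3:ℚ) + (h 4:ℚ) := by
    rw [hf]; norm_num [Finset.sum_range_succ, Nat.choose]; ring
  have F5 : 32 * f 5 = 126*(h 0:ℚ) + 70*(h 1:ℚ) + 35*(h 2:ℚ) + 15*(h 3:ℚ) + 6*(h 4:ℚ) := by
    rw [hf]; norm_num [Finset.sum_range_succ, Nat.choose, e5]; ring
  have F6 : 64 * f 6 = 84*(h 0:ℚ) + 56*(h 1:ℚ) + 35*(h 2:ℚ) + 21*(h 3:ℚ) + 14*(h 4:ℚ) := by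
    rw [hf]; norm_num [Finset.sum_range_succ, Nat.choose, e5, e6]; ring
  have F7 : 128 * f 7 = 36*(h 0:ℚ) + 28*(h 1:ℚ) + 22*(h 2:ℚ) + 18*(h 3:ℚ) + 16*(h 4:ℚ) := by
    rw [hf]; norm_num [Finset.sum_range_succ, Nat.choose, e5, e6, e7]; ring
  have F8 : 256 * f 8 = 9*(h 0:ℚ) + 9*(h 1:ℚ) + 9*(h 2:ℚ) + 9*(h 3:ℚ) + 9*(h 4:ℚ) := by
    rw [hf]; norm_num [Finset.sum_range_succ, Nat.choose, e5, e6, e7, e8]; ring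
  have F9 : 256 * f 9 = (h 0:ℚ) + (h 1:ℚ) + (h 2:ℚ) + (h 3:ℚ) + (h 4:ℚ) := by
    rw [hf]; norm_num [Finset.sum_range_succ, Nat.choose, e5, e6, e7, e8, e9]; ring
  -- the four dips are impossible
  have nd1 : ¬(f 4 < f 3 ∧ f 4 < f 5) := by
    rintro ⟨h1, h2⟩; linarith
  have nd2 : ¬(f 4 < f 3 ∧ f 4 < f 6) := by
    rintro ⟨h1, h2⟩; linarith
  have nd3 : ¬(f 5 < f 3 ∧ f 5 < f 6) := by
    rintro ⟨h1, h2⟩; linarith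
  have nd4 : ¬(f 5 < f 4 ∧ f 5 < f 6) := by
    rintro ⟨h1, h2⟩; linarith
  refine ⟨nd1, nd2, nd3, nd4, ?_⟩
  have g01 : f 0 ≤ f 1 := by linarith
  have g12 : f 1 ≤ f 2 := by linarith
  have g23 : f 2 ≤ f 3 := by linarith
  have g67 : f 7 ≤ f 6 := by linarith
  have g78 : f 8 ≤ f 7 := by linarith
  have g89 : f 9 ≤ f 8 := by linarith
  have main : ∀ q : ℕ, 3 ≤ q → q ≤ 6 → (f 3 ≤ f 4 ∨ q ≤ 3) → (f 4 ≤ f 5 ∨ q ≤ 4) →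
      (f 5 ≤ f 6 ∨ q ≤ 5) → (f 4 ≤ f 3 ∨ 4 ≤ q) → (f 5 ≤ f 4 ∨ 5 ≤ q) →
      (f 6 ≤ f 5 ∨ 6 ≤ q) →
      (∀ j, j + 1 ≤ q → f j ≤ f (j + 1)) ∧
      (∀ j, q ≤ j → j + 1 ≤ 9 → f (j + 1) ≤ f j) := by
    intro q hq3 hq6 u34 u45 u56 d34 d45 d56
    constructor
    · intro j hj
      have hcase : j = 0 ∨ j = 1 ∨ j = 2 ∨ j = 3 ∨ j = 4 ∨ j = 5 := by omega
      rcases hcase with rfl | rfl | rfl | rfl | rfl | rfl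
      · exact g01
      · exact g12
      · exact g23
      · rcases u34 with hu | hu
        · exact hu
        · omega
      · rcases u45 with hu | hu
        · exact hu
        · omega
      · rcases u56 with hu | hu
        · exact hu
        · omega
    · intro j hjq hj9
      have hcase : j = 0 ∨ j = 1 ∨ j = 2 ∨ j = 3 ∨ j = 4 ∨ j = 5 ∨ j = 6 ∨ j = 7 ∨ j = 8 := by
        omega
      rcases hcase with rfl | rfl | rfl | rfl | rfl | rfl | rfl | rfl | rfl
      · omega
      · omega
      · omega
      · rcases d34 with hd' | hd'
        · exact hd'
        · omega
      · rcases d45 with hd' | hd'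
        · exact hd'
        · omega
      · rcases d56 with hd' | hd'
        · exact hd'
        · omega
      · exact g67
      · exact g78
      · exact g89
  rcases le_or_gt (f 3) (f 4) with h34 | h34
  · rcases le_or_gt (f 4) (f 5) with h45 | h45
    · rcases le_or_gt (f 5) (f 6) with h56 | h56
      · exact ⟨6, by omega, main 6 (by omega) (by omega) (Or.inl h34) (Or.inl h45) (Or.inl h56)
          (Or.inr (by omega)) (Or.inr (by omega)) (Or.inr (by omega))⟩
      · exact ⟨5, by omega, main 5 (by omega) (by omega) (Or.inl h34) (Or.inl h45) (Or.inr (by omega))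
          (Or.inr (by omega)) (Or.inr (by omega)) (Or.inl h56.le)⟩
    · have h65 : f 6 ≤ f 5 := by
        by_contra hcon; push_neg at hcon; exact nd4 ⟨h45, hcon⟩
      exact ⟨4, by omega, main 4 (by omega) (by omega) (Or.inl h34) (Or.inr (by omega))
        (Or.inr (by omega)) (Or.inr (by omega)) (Or.inl h45.le) (Or.inl h65)⟩
  · have h54 : f 5 ≤ f 4 := by
      by_contra hcon; push_neg at hcon; exact nd1 ⟨h34, hcon⟩
    have h65 : f 6 ≤ f 5 := by
      rcases lt_or_ge (f 5) (f 4) with hlt | hle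
      · by_contra hcon; push_neg at hcon; exact nd4 ⟨hlt, hcon⟩
      · have h64 : f 6 ≤ f 4 := by
          by_contra hcon; push_neg at hcon; exact nd2 ⟨h34, hcon⟩
        linarith
    exact ⟨3, by omega, main 3 (by omega) (by omega) (Or.inr (by omega)) (Or.inr (by omega))
      (Or.inr (by omega)) (Or.inl h34.le) (Or.inl h54) (Or.inl h65)⟩
end
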